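/- For all t > 0, one has (1/2)(t − 1)² ≤ ψ(t) ≤ (1/2)(ψ'(t))², where ψ(t) = (1/2)(2t² + 1/t² − 5) + e^{1/t−1}. -/

import Mathlib

noncomputable def psi (t : ℝ) : ℝ :=
  (1/2) * (2*t^2 + 1/t^2 - 5) + Real.exp (1/t - 1)

noncomputable def psi' (t : ℝ) : ℝ := 2*t - 1/t^3 - (1/t^2) * Real.exp (1/t - 1)

noncomputable def psi'' (t : ℝ) : ℝ := 2 + 3/t^4 + (2/t^3 + 1/t^4) * Real.exp (1/t - 1)

lemma hd_inner {t : ℝ} (ht : 0 < t) : HasDerivAt (fun x : ℝ => 1/x - 1) (-(t^2)⁻¹) t := by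
  simpa [one_div] using (hasDerivAt_inv (ne_of_gt ht)).sub_const 1

lemma hd_psi {t : ℝ} (ht : 0 < t) : HasDerivAt psi (psi' t) t := by
  have h1 : HasDerivAt (fun x : ℝ => (1/2) * (2*x^2 + 1/x^2 - 5))
      ((1/2) * (2*(2*t) + -(2*t)/(t^2)^2)) t := by
    have hp : HasDerivAt (fun x : ℝ => x^2) (2*t) t := by
      simpa using hasDerivAt_pow 2 t
    have hinv : HasDerivAt (fun x : ℝ => 1/x^2) (-(2*t)/(t^2)^2) t := by
      simpa [one_div] using hp.fun_inv (pow_ne_zero 2 (ne_of_gt ht))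
    exact (((hp.const_mul 2).add hinv).sub_const 5).const_mul (1/2)
  have h2 : HasDerivAt (fun x : ℝ => Real.exp (1/x - 1))
      (Real.exp (1/t - 1) * -(t^2)⁻¹) t := (hd_inner ht).exp
  have := h1.add h2
  refine this.congr_deriv ?_
  unfold psi'
  field_simp
  ring

lemma hd_psi' {t : ℝ} (ht : 0 < t) : HasDerivAt psi' (psi'' t) t := by
  have ht3 : (t:ℝ)^3 ≠ 0 := pow_ne_zero 3 (ne_of_gt ht)
  have ht2 : (t:ℝ)^2 ≠ 0 := pow_ne_zero 2 (ne_of_gt ht)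
  have hp3 : HasDerivAt (fun x : ℝ => x^3) (3*t^2) t := by
    simpa using hasDerivAt_pow 3 t
  have hp2 : HasDerivAt (fun x : ℝ => x^2) (2*t) t := by
    simpa using hasDerivAt_pow 2 t
  have h1 : HasDerivAt (fun x : ℝ => 2*x) (2:ℝ) t := by
    simpa using (hasDerivAt_id t).const_mul 2
  have h2 : HasDerivAt (fun x : ℝ => 1/x^3) (-(3*t^2)/(t^3)^2) t := by
    simpa [one_div] using hp3.fun_inv ht3
  have hexp : HasDerivAt (fun x : ℝ => Real.exp (1/x - 1))
      (Real.exp (1/t - 1) * -(t^2)⁻¹) t := (hd_inner ht).exp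
  have hinv2 : HasDerivAt (fun x : ℝ => 1/x^2) (-(2*t)/(t^2)^2) t := by
    simpa [one_div] using hp2.fun_inv ht2
  have h3 : HasDerivAt (fun x : ℝ => (1/x^2) * Real.exp (1/x - 1))
      ((-(2*t)/(t^2)^2) * Real.exp (1/t - 1) + (1/t^2) * (Real.exp (1/t - 1) * -(t^2)⁻¹)) t :=
    hinv2.mul hexp
  have := (h1.sub h2).sub h3
  refine this.congr_deriv ?_
  unfold psi''
  field_simp
  ring

noncomputable def g (t : ℝ) : ℝ := (1/2) * (psi' t)^2 - psi t

lemma hd_g {t : ℝ} (ht : 0 < t) : HasDerivAt g (psi' t * (psi'' t - 1)) t := by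
  have h := (((hd_psi' ht).pow 2).const_mul (1/2:ℝ)).sub (hd_psi ht)
  refine h.congr_deriv ?_
  ring

lemma psi_one : psi 1 = 0 := by simp [psi]; norm_num
lemma psi'_one : psi' 1 = 0 := by simp [psi']; norm_num

lemma psi''_ge_one {t : ℝ} (ht : 0 < t) : 1 ≤ psi'' t := by
  unfold psi''
  have := Real.exp_pos (1/t - 1)
  nlinarith [pow_pos ht 3, pow_pos ht 4, div_pos (by norm_num : (0:ℝ) < 3) (pow_pos ht 4),
    mul_pos (div_pos (by norm_num : (0:ℝ) < 2) (pow_pos ht 3)) this,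
    mul_pos (div_pos (by norm_num : (0:ℝ) < 1) (pow_pos ht 4)) this]

lemma psi'_mono : StrictMonoOn psi' (Set.Ioi 0) := by
  apply strictMonoOn_of_deriv_pos (convex_Ioi 0)
  · intro x hx
    exact (hd_psi' hx).continuousAt.continuousWithinAt
  · intro x hx
    rw [interior_Ioi] at hx
    rw [(hd_psi' hx).deriv]
    linarith [psi''_ge_one hx]

lemma psi'_nonneg {t : ℝ} (ht : 1 ≤ t) : 0 ≤ psi' t := by
  rcases eq_or_lt_of_le ht with h | h
  · simp [← h, psi'_one]
  · have := psi'_mono (Set.mem_Ioi.2 one_pos) (Set.mem_Ioi.2 (lt_trans one_pos h)) h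
    rw [psi'_one] at this
    exact this.le

lemma psi'_nonpos {t : ℝ} (ht : 0 < t) (ht1 : t ≤ 1) : psi' t ≤ 0 := by
  rcases eq_or_lt_of_le ht1 with h | h
  · simp [h, psi'_one]
  · have := psi'_mono (Set.mem_Ioi.2 ht) (Set.mem_Ioi.2 one_pos) h
    rw [psi'_one] at this
    exact this.le

lemma g_nonneg {t : ℝ} (ht : 0 < t) : 0 ≤ g t := by
  have hg1 : g 1 = 0 := by simp [g, psi_one, psi'_one]
  rcases le_or_gt 1 t with h | h
  · have hmono : MonotoneOn g (Set.Ici 1) := by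
      apply monotoneOn_of_deriv_nonneg (convex_Ici 1)
      · intro x hx
        exact (hd_g (lt_of_lt_of_le one_pos hx)).continuousAt.continuousWithinAt
      · intro x hx
        rw [interior_Ici] at hx
        exact ((hd_g (lt_trans one_pos hx)).differentiableAt).differentiableWithinAt
      · intro x hx
        rw [interior_Ici] at hx
        have hx0 : (0:ℝ) < x := lt_trans one_pos hx
        rw [(hd_g hx0).deriv]
        exact mul_nonneg (psi'_nonneg hx.le) (by linarith [psi''_ge_one hx0])
    have := hmono (Set.mem_Ici.2 le_rfl) (Set.mem_Ici.2 h) h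
    rwa [hg1] at this
  · have hmono : AntitoneOn g (Set.Ioc 0 1) := by
      apply antitoneOn_of_deriv_nonpos (convex_Ioc 0 1)
      · intro x hx
        exact (hd_g hx.1).continuousAt.continuousWithinAt
      · intro x hx
        rw [interior_Ioc] at hx
        exact ((hd_g hx.1).differentiableAt).differentiableWithinAt
      · intro x hx
        rw [interior_Ioc] at hx
        rw [(hd_g hx.1).deriv]
        exact mul_nonpos_of_nonpos_of_nonneg (psi'_nonpos hx.1 hx.2.le)
          (by linarith [psi''_ge_one hx.1])
    have := hmono (Set.mem_Ioc.2 ⟨ht, h.le⟩) (Set.mem_Ioc.2 ⟨one_pos, le_rfl⟩) h.le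
    rwa [hg1] at this

theorem stmt_10 : ∀ t : ℝ, 0 < t →
    (1/2) * (t - 1)^2 ≤ psi t ∧ psi t ≤ (1/2) * (psi' t)^2 := by
  intro t ht
  constructor
  · have hexp : 1/t - 1 + 1 ≤ Real.exp (1/t - 1) := Real.add_one_le_exp _
    have h1 : 1/t ≤ Real.exp (1/t - 1) := by linarith
    unfold psi
    have heq : 1/2*(2*t^2+1/t^2-5) + 1/t - 1/2*(t-1)^2 = (t-1)^2*(t^2+4*t+1)/(2*t^2) := by
      field_simp
      ring
    have h2 : 0 ≤ (t-1)^2*(t^2+4*t+1)/(2*t^2) := by positivity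
    linarith
  · have := g_nonneg ht
    unfold g at this
    linarith
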